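/- For every real x and real λ ≠ 0, the function G(x) = x · ∑_{n=0}^∞ [(1/2)_n / ((3/2)_n (3/2)_n)] · (−λ²x²/4)ⁿ / n! is differentiable and satisfies G'(x) = sin(λx)/(λx) for x ≠ 0 (with G'(0) = 1), i.e., G is an antiderivative of sin(λx)/(λx). -/

import Mathlib

noncomputable def poch (a : ℝ) (n : ℕ) : ℝ := ∏ i ∈ Finset.range n, (a + (i : ℝ))

lemma poch_succ (a : ℝ) (n : ℕ) : poch a (n + 1) = poch a n * (a + n) :=
  Finset.prod_range_succ _ _

lemma poch_pos {a : ℝ} (ha : 0 < a) (n : ℕ) : 0 < poch a n :=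
  Finset.prod_pos fun i _ => by positivity

lemma poch_shift (n : ℕ) : poch (1/2) n * (2 * n + 1) = poch (3/2) n := by
  induction n with
  | zero => simp [poch]
  | succ n ih =>
    rw [poch_succ, poch_succ]
    push_cast
    linear_combination (3/2 + (n:ℝ)) * ih

lemma poch_th (n : ℕ) : poch (3/2) n * ((4:ℝ)^n * (n.factorial : ℝ)) = ((2*n+1).factorial : ℝ) := by
  induction n with
  | zero => simp [poch]
  | succ n ih =>
    rw [poch_succ]
    have h : 2 * (n+1) + 1 = (2*n+1) + 1 + 1 := by ring
    rw [h, Nat.factorial_succ, Nat.factorial_succ, Nat.factorial_succ, pow_succ]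
    push_cast
    linear_combination ((3/2 + (n:ℝ)) * 4 * ((n:ℝ)+1)) * ih

theorem stmt_0 (l : ℝ) (hl : l ≠ 0) (x : ℝ) :
    HasDerivAt (fun y : ℝ => y * ∑' n : ℕ,
        poch (1/2) n / (poch (3/2) n * poch (3/2) n) *
          (-(l ^ 2 * y ^ 2) / 4) ^ n / (n.factorial : ℝ))
      (if x = 0 then 1 else Real.sin (l * x) / (l * x)) x := by
  -- the coefficient of the monomial expansion
  set C : ℕ → ℝ := fun n =>
    poch (1/2) n / (poch (3/2) n * poch (3/2) n) * (-(l ^ 2) / 4) ^ n / (n.factorial : ℝ) with hC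
  set f : ℕ → ℝ → ℝ := fun n y => C n * y ^ (2*n+1) with hf
  set f' : ℕ → ℝ → ℝ := fun n y => (-1)^n * l^(2*n) * y^(2*n) / ((2*n+1).factorial : ℝ) with hf'
  -- key coefficient identity
  have key : ∀ n : ℕ, C n * (2*n+1 : ℝ) = (-1)^n * l^(2*n) / ((2*n+1).factorial : ℝ) := by
    intro n
    have hB : poch (3/2) n ≠ 0 := (poch_pos (by norm_num) n).ne'
    have hF : (n.factorial : ℝ) ≠ 0 := Nat.cast_ne_zero.mpr n.factorial_ne_zero
    have hS : ((2*n+1).factorial : ℝ) ≠ 0 := Nat.cast_ne_zero.mpr (2*n+1).factorial_ne_zero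
    have h4 : ((4:ℝ)^n) ≠ 0 := by positivity
    have hshift := poch_shift n
    have hth := poch_th n
    have hpow : (-(l ^ 2) / 4) ^ n = (-1)^n * l^(2*n) / 4^n := by
      rw [div_pow, neg_pow, ← pow_mul]
    have hA : poch (1/2) n ≠ 0 := (poch_pos (by norm_num) n).ne'
    rw [eq_div_iff hS, hC]
    simp only
    rw [hpow, ← hth, ← hshift]
    field_simp
  -- rewrite the function as a tsum of monomials
  have hfun : (fun y : ℝ => y * ∑' n : ℕ,
        poch (1/2) n / (poch (3/2) n * poch (3/2) n) *
          (-(l ^ 2 * y ^ 2) / 4) ^ n / (n.factorial : ℝ)) = fun y => ∑' n, f n y := by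
    funext y
    rw [← tsum_mul_left]
    refine tsum_congr fun n => ?_
    have : (-(l ^ 2 * y ^ 2) / 4) ^ n = (-(l ^ 2) / 4) ^ n * (y^2)^n := by
      rw [← mul_pow]; ring_nf
    rw [hf, hC]
    simp only
    rw [this, ← pow_mul]
    ring
  rw [hfun]
  -- set up differentiation of the series
  set R : ℝ := |x| + 1 with hR
  have hxR : x ∈ Set.Ioo (-R) R := by
    constructor <;> cases abs_cases x <;> simp_all <;> linarith
  have h0R : (0:ℝ) ∈ Set.Ioo (-R) R := by
    constructor <;> cases abs_cases x <;> simp_all <;> linarith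
  set u : ℕ → ℝ := fun n => (|l| * R)^(2*n) / ((2*n).factorial : ℝ) with hu
  have hu_sum : Summable u := by
    have := Real.summable_pow_div_factorial (|l| * R)
    exact this.comp_injective (fun a b h => by omega)
  have hderiv : ∀ (n : ℕ) (y : ℝ), y ∈ Set.Ioo (-R) R → HasDerivAt (f n) (f' n y) y := by
    intro n y _
    have h := (hasDerivAt_pow (2*n+1) y).const_mul (C n)
    have he : C n * (↑(2*n+1) * y ^ (2*n+1-1)) = f' n y := by
      rw [hf']
      simp only
      have h1 : 2*n+1-1 = 2*n := by omega
      rw [h1]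
      push_cast
      have := key n
      calc C n * ((2*(n:ℝ)+1) * y ^ (2*n)) = (C n * (2*(n:ℝ)+1)) * y ^ (2*n) := by ring
        _ = ((-1)^n * l^(2*n) / ((2*n+1).factorial : ℝ)) * y ^ (2*n) := by rw [this]
        _ = (-1)^n * l^(2*n) * y^(2*n) / ((2*n+1).factorial : ℝ) := by ring
    rw [he] at h
    exact h
  have hbound : ∀ (n : ℕ) (y : ℝ), y ∈ Set.Ioo (-R) R → ‖f' n y‖ ≤ u n := by
    intro n y hy
    have hyR : |y| ≤ R := by
      rw [abs_le]; exact ⟨hy.1.le, hy.2.le⟩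
    have hR0 : 0 ≤ R := by positivity
    rw [hf', hu]
    simp only [Real.norm_eq_abs]
    rw [abs_div, abs_mul, abs_mul, abs_pow, abs_pow, abs_pow, abs_neg, abs_one, one_pow, one_mul,
      abs_of_nonneg (by positivity : (0:ℝ) ≤ ((2*n+1).factorial : ℝ)), mul_pow]
    have h1 : |l|^(2*n) * |y|^(2*n) ≤ |l|^(2*n) * R^(2*n) := by
      apply mul_le_mul_of_nonneg_left (pow_le_pow_left₀ (abs_nonneg y) hyR _) (by positivity)
    have h2 : ((2*n).factorial : ℝ) ≤ ((2*n+1).factorial : ℝ) := by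
      exact_mod_cast Nat.factorial_le (by omega)
    have h3 : (0:ℝ) < ((2*n).factorial : ℝ) := by positivity
    calc |l|^(2*n) * |y|^(2*n) / ((2*n+1).factorial : ℝ)
        ≤ |l|^(2*n) * R^(2*n) / ((2*n+1).factorial : ℝ) := by
          apply div_le_div_of_nonneg_right h1 (by positivity) |>.trans_eq rfl
      _ ≤ |l|^(2*n) * R^(2*n) / ((2*n).factorial : ℝ) := by
          apply div_le_div_of_nonneg_left (by positivity) h3 h2
  have hsum0 : Summable fun n => f n 0 := by
    have : (fun n => f n 0) = fun _ => (0:ℝ) := by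
      funext n; rw [hf]; simp
    rw [this]; exact summable_zero
  have H := hasDerivAt_tsum_of_isPreconnected hu_sum isOpen_Ioo
    (isPreconnected_Ioo) hderiv hbound h0R hsum0 hxR
  -- identify the sum of derivatives with the target
  have hval : (∑' n, f' n x) = (if x = 0 then 1 else Real.sin (l * x) / (l * x)) := by
    by_cases hx : x = 0
    · simp only [hx, if_pos]
      rw [tsum_eq_single 0]
      · rw [hf']; norm_num
      · intro n hn
        rw [hf']
        simp only
        rw [zero_pow (by omega : 2*n ≠ 0)]
        ring
    · rw [if_neg hx, Real.sin_eq_tsum, ← tsum_div_const]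
      refine tsum_congr fun n => ?_
      rw [hf']
      simp only
      have hlx : l * x ≠ 0 := mul_ne_zero hl hx
      field_simp
      rw [pow_succ, mul_pow]
      ring
  rw [← hval]
  exact H
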